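/- Let Γ and Γ' be linearly ordered (additive) abelian groups and R a commutative ring. Then there is a ring isomorphism Φ : HahnSeries (Γ ×ₗ Γ') R ≃ HahnSeries Γ (HahnSeries Γ' R), where Γ ×ₗ Γ' carries the lexicographic order with the first coordinate dominant, determined by ((Φ x) g) g' = x (g, g') for all g ∈ Γ, g' ∈ Γ'; i.e., Φ sends ∑_{(g,g')} r_{(g,g')} T^{(g,g')} to ∑_g (∑_{g'} r_{(g,g')} T^{g'}) T^g. -/

import Mathlib

open Finset

namespace HahnSeries

variable {Γ Γ' R : Type*}
    [AddCommGroup Γ] [LinearOrder Γ] [IsOrderedAddMonoid Γ]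
    [AddCommGroup Γ'] [LinearOrder Γ'] [IsOrderedAddMonoid Γ'] [CommRing R]

lemma toIterate_coeff' (x : HahnSeries (Γ ×ₗ Γ') R) (g : Γ) (g' : Γ') :
    (x.toIterate.coeff g).coeff g' = x.coeff (toLex (g, g')) := rfl

lemma toIterate_mul (x y : HahnSeries (Γ ×ₗ Γ') R) :
    (x * y).toIterate = x.toIterate * y.toIterate := by
  ext g g'
  rw [toIterate_coeff', coeff_mul, coeff_mul,
    show (∑ ij ∈ antidiagonal x.toIterate.isPWO_support y.toIterate.isPWO_support g,
        x.toIterate.coeff ij.1 * y.toIterate.coeff ij.2).coeff g'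
      = ∑ ij ∈ antidiagonal x.toIterate.isPWO_support y.toIterate.isPWO_support g,
        (x.toIterate.coeff ij.1 * y.toIterate.coeff ij.2).coeff g'
      from map_sum (coeff.addMonoidHom g') _ _]
  simp_rw [coeff_mul]
  rw [Finset.sum_sigma']
  refine Finset.sum_bij'
    (fun ij _ => ⟨((ofLex ij.1).1, (ofLex ij.2).1), ((ofLex ij.1).2, (ofLex ij.2).2)⟩)
    (fun p _ => (toLex (p.1.1, p.2.1), toLex (p.1.2, p.2.2)))
    ?_ ?_ ?_ ?_ ?_
  · rintro ⟨⟨a, p⟩, ⟨b, q⟩⟩ h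
    simp only [Finset.mem_antidiagonal, Set.mem_setOf_eq, mem_support] at h
    obtain ⟨hx, hy, hsum⟩ := h
    have hsum' : (a + b, p + q) = (g, g') := congrArg ofLex hsum
    simp only [Prod.mk.injEq] at hsum'
    simp only [mem_sigma, Finset.mem_antidiagonal, mem_support, toIterate_coeff']
    refine ⟨⟨?_, ?_, hsum'.1⟩, hx, hy, hsum'.2⟩
    · exact fun h0 => hx (by exact congrArg (fun s => s.coeff p) h0)
    · exact fun h0 => hy (by exact congrArg (fun s => s.coeff q) h0)
  · rintro ⟨⟨a, b⟩, ⟨p, q⟩⟩ h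
    simp only [mem_sigma, Finset.mem_antidiagonal, mem_support, toIterate_coeff'] at h
    obtain ⟨⟨-, -, hab⟩, hx, hy, hpq⟩ := h
    simp only [Finset.mem_antidiagonal, mem_support]
    refine ⟨hx, hy, ?_⟩
    change toLex (a + b, p + q) = toLex (g, g')
    rw [hab, hpq]
  · rintro ⟨⟨a, p⟩, ⟨b, q⟩⟩ _; rfl
  · rintro ⟨⟨a, b⟩, ⟨p, q⟩⟩ _; rfl
  · rintro ⟨⟨a, p⟩, ⟨b, q⟩⟩ _; rfl

lemma toIterate_add (x y : HahnSeries (Γ ×ₗ Γ') R) :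
    (x + y).toIterate = x.toIterate + y.toIterate := by
  ext g g'
  simp [toIterate_coeff', coeff_add]

/-- The ring equivalence between Hahn series on a lex product and iterated Hahn series. -/
def iterateRingEquiv : HahnSeries (Γ ×ₗ Γ') R ≃+* HahnSeries Γ (HahnSeries Γ' R) where
  toFun := toIterate
  invFun := ofIterate
  left_inv _ := rfl
  right_inv _ := rfl
  map_mul' := toIterate_mul
  map_add' := toIterate_add

end HahnSeries

/-- Hahn series over a lexicographic product of exponent groups (first coordinate
dominant) are ring-isomorphic to iterated Hahn series: there is a ring isomorphism
`Φ : HahnSeries (Γ ×ₗ Γ') R ≃+* HahnSeries Γ (HahnSeries Γ' R)` with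
`((Φ x) g) g' = x (g, g')` for all exponents `g, g'`. -/
theorem hahnSeries_lex_iterate {Γ Γ' R : Type*}
    [AddCommGroup Γ] [LinearOrder Γ] [IsOrderedAddMonoid Γ]
    [AddCommGroup Γ'] [LinearOrder Γ'] [IsOrderedAddMonoid Γ'] [CommRing R] :
    ∃ Φ : HahnSeries (Γ ×ₗ Γ') R ≃+* HahnSeries Γ (HahnSeries Γ' R),
      ∀ (x : HahnSeries (Γ ×ₗ Γ') R) (g : Γ) (g' : Γ'),
        ((Φ x).coeff g).coeff g' = x.coeff (toLex (g, g')) := by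
  exact ⟨HahnSeries.iterateRingEquiv, fun _ _ _ => rfl⟩
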